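/- Let X, Y be independent standard Gaussian random variables, a > 0, b ∈ ℝ, c > 0, and β = (c − b)/a. Set ξ = aX + bY and p = cY. Then E[p · sgn(ξ − p)] = −2cβ/(√(2π)·√(1+β²)). -/

import Mathlib

open MeasureTheory ProbabilityTheory Real Filter
open scoped NNReal ENNReal

noncomputable def stdPdf (x : ℝ) : ℝ := (Real.sqrt (2 * Real.pi))⁻¹ * Real.exp (-x^2/2)

lemma integrable_mul_stdPdf : Integrable (fun y : ℝ => y * stdPdf y) := by
  have h := (integrable_mul_exp_neg_mul_sq (b := (1:ℝ)/2) (by norm_num)).const_mul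
    ((Real.sqrt (2*Real.pi))⁻¹)
  refine h.congr (Filter.Eventually.of_forall fun y => ?_)
  have : -(1/2:ℝ)*y^2 = -y^2/2 := by ring
  simp only [this, stdPdf]; ring

lemma hasDerivAt_neg_stdPdf (y : ℝ) :
    HasDerivAt (fun z : ℝ => -stdPdf z) (y * stdPdf y) y := by
  have h1 : HasDerivAt (fun z : ℝ => -z^2/2) (-y) y := by
    have := ((hasDerivAt_pow 2 y).neg).div_const 2
    exact this.congr_deriv (by ring)
  have h2 := (h1.exp.const_mul ((Real.sqrt (2*Real.pi))⁻¹)).neg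
  exact h2.congr_deriv (by simp only [stdPdf]; ring)

lemma tendsto_neg_sq_div_two_atTop : Tendsto (fun y : ℝ => -y^2/2) atTop atBot := by
  have h : Tendsto (fun y : ℝ => y^2/2) atTop atTop :=
    (tendsto_pow_atTop (two_ne_zero)).atTop_div_const (by norm_num)
  have := tendsto_neg_atTop_atBot.comp h
  refine this.congr fun y => by simp [Function.comp]; ring

lemma tendsto_neg_sq_div_two_atBot : Tendsto (fun y : ℝ => -y^2/2) atBot atBot := by
  have := tendsto_neg_sq_div_two_atTop.comp tendsto_neg_atBot_atTop
  refine this.congr fun y => by simp [Function.comp]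

lemma tendsto_neg_stdPdf_atTop : Tendsto (fun y : ℝ => -stdPdf y) atTop (nhds 0) := by
  have h := (Real.tendsto_exp_atBot.comp tendsto_neg_sq_div_two_atTop).const_mul
    ((Real.sqrt (2*Real.pi))⁻¹)
  simpa [stdPdf, Function.comp] using h.neg

lemma tendsto_neg_stdPdf_atBot : Tendsto (fun y : ℝ => -stdPdf y) atBot (nhds 0) := by
  have h := (Real.tendsto_exp_atBot.comp tendsto_neg_sq_div_two_atBot).const_mul
    ((Real.sqrt (2*Real.pi))⁻¹)
  simpa [stdPdf, Function.comp] using h.neg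

lemma integral_Ioi_mul_stdPdf (t : ℝ) : ∫ y in Set.Ioi t, y * stdPdf y = stdPdf t := by
  rw [integral_Ioi_of_hasDerivAt_of_tendsto' (fun y _ => hasDerivAt_neg_stdPdf y)
    integrable_mul_stdPdf.integrableOn tendsto_neg_stdPdf_atTop]
  ring

lemma integral_Iio_mul_stdPdf (t : ℝ) : ∫ y in Set.Iio t, y * stdPdf y = -stdPdf t := by
  rw [← integral_Iic_eq_integral_Iio]
  rw [integral_Iic_of_hasDerivAt_of_tendsto (f := fun z => -stdPdf z)
    (hasDerivAt_neg_stdPdf t).continuousAt.continuousWithinAt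
    (fun y _ => hasDerivAt_neg_stdPdf y)
    integrable_mul_stdPdf.integrableOn tendsto_neg_stdPdf_atBot]
  ring

lemma stdPdf_eq (x : ℝ) : gaussianPDFReal 0 1 x = stdPdf x := by
  simp [gaussianPDFReal, stdPdf]

lemma stdPdf_nonneg (x : ℝ) : 0 ≤ stdPdf x := by unfold stdPdf; positivity

lemma stdPdf_even (x : ℝ) : stdPdf (-x) = stdPdf x := by simp [stdPdf]

lemma measurable_stdPdf : Measurable stdPdf :=
  ((((measurable_id.pow_const 2).neg).div_const 2).exp).const_mul _

lemma measurable_realSign : Measurable Real.sign := by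
  have h : Real.sign = fun r : ℝ => if r < 0 then (-1:ℝ) else if 0 < r then 1 else 0 := by
    ext r; rfl
  rw [h]
  exact Measurable.ite (measurableSet_lt measurable_id measurable_const) measurable_const
    (Measurable.ite (measurableSet_lt measurable_const measurable_id) measurable_const measurable_const)

lemma abs_realSign (r : ℝ) : |Real.sign r| ≤ 1 := by
  rcases Real.sign_apply_eq r with h | h | h <;> simp [h]

-- density transfer
lemma integral_gaussianReal_eq (g : ℝ → ℝ) :
    ∫ x, g x ∂(gaussianReal 0 1) = ∫ x, stdPdf x * g x := by
  rw [gaussianReal_of_var_ne_zero 0 one_ne_zero]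
  have h : gaussianPDF 0 1 = fun x => ((Real.toNNReal (gaussianPDFReal 0 1 x) : ℝ≥0) : ℝ≥0∞) := by
    rfl
  rw [h, integral_withDensity_eq_integral_smul
    ((measurable_gaussianPDFReal 0 1).real_toNNReal) g]
  congr 1; ext x
  rw [NNReal.smul_def, smul_eq_mul, Real.coe_toNNReal _ (gaussianPDFReal_nonneg 0 1 x), stdPdf_eq]

lemma integrable_gaussianReal_iff (g : ℝ → ℝ) (hg : Measurable g) :
    Integrable g (gaussianReal 0 1) ↔ Integrable (fun x => g x * stdPdf x) := by
  rw [gaussianReal_of_var_ne_zero 0 one_ne_zero, gaussianPDF_def,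
    integrable_withDensity_iff (measurable_gaussianPDFReal 0 1).ennreal_ofReal
      (Filter.Eventually.of_forall fun x => ENNReal.ofReal_lt_top)]
  refine integrable_congr (Filter.Eventually.of_forall fun x => ?_)
  simp only [stdPdf_eq, ENNReal.toReal_ofReal (stdPdf_nonneg x)]

lemma stdPdf_eval (x : ℝ) : stdPdf x = (Real.sqrt (2 * Real.pi))⁻¹ * Real.exp (-x^2/2) := rfl

lemma integral_sign_shift (t : ℝ) :
    ∫ y, y * Real.sign (y - t) ∂(gaussianReal 0 1) = 2 * stdPdf t := by
  rw [integral_gaussianReal_eq]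
  have hm : Measurable (fun y : ℝ => stdPdf y * (y * Real.sign (y - t))) :=
    measurable_stdPdf.mul (measurable_id.mul
      (measurable_realSign.comp (measurable_id.sub measurable_const)))
  have hInt : Integrable (fun y : ℝ => stdPdf y * (y * Real.sign (y - t))) := by
    refine integrable_mul_stdPdf.abs.mono' hm.aestronglyMeasurable
      (Filter.Eventually.of_forall fun y => ?_)
    have h1 : |Real.sign (y - t)| ≤ 1 := abs_realSign _
    calc ‖stdPdf y * (y * Real.sign (y - t))‖
        = |y * stdPdf y| * |Real.sign (y - t)| := by
          rw [norm_eq_abs, abs_mul, abs_mul, abs_mul]; ring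
      _ ≤ |y * stdPdf y| * 1 := by
          exact mul_le_mul_of_nonneg_left h1 (abs_nonneg _)
      _ = |y * stdPdf y| := mul_one _
  rw [← intervalIntegral.integral_Iio_add_Ici (b := t) hInt.integrableOn hInt.integrableOn]
  have h1 : ∫ y in Set.Iio t, stdPdf y * (y * Real.sign (y - t)) = stdPdf t := by
    rw [setIntegral_congr_fun measurableSet_Iio (g := fun y => -(y * stdPdf y))
      (fun y hy => by
        rw [Real.sign_of_neg (by simpa [sub_neg] using hy)]; ring)]
    rw [integral_neg, integral_Iio_mul_stdPdf]; ring
  have h2 : ∫ y in Set.Ici t, stdPdf y * (y * Real.sign (y - t)) = stdPdf t := by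
    rw [integral_Ici_eq_integral_Ioi]
    rw [setIntegral_congr_fun measurableSet_Ioi (g := fun y => y * stdPdf y)
      (fun y hy => by
        rw [Real.sign_of_pos (by simpa [sub_pos] using hy)]; ring)]
    exact integral_Ioi_mul_stdPdf t
  rw [h1, h2]; ring

lemma gaussianReal_std_ac : gaussianReal 0 1 ≪ (volume : Measure ℝ) := by
  rw [gaussianReal_of_var_ne_zero 0 one_ne_zero]
  exact withDensity_absolutelyContinuous _ _

lemma sign_const_mul (d z : ℝ) (hd : d ≠ 0) :
    Real.sign (d * z) = (d / |d|) * Real.sign z := by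
  rcases lt_trichotomy d 0 with hdlt | h | hdgt
  · rw [abs_of_neg hdlt, div_neg, div_self hd]
    rcases lt_trichotomy z 0 with hz | rfl | hz
    · rw [Real.sign_of_pos (mul_pos_of_neg_of_neg hdlt hz), Real.sign_of_neg hz]; ring
    · simp [Real.sign_zero]
    · rw [Real.sign_of_neg (mul_neg_of_neg_of_pos hdlt hz), Real.sign_of_pos hz]; ring
  · exact absurd h hd
  · rw [abs_of_pos hdgt, div_self hd]
    rcases lt_trichotomy z 0 with hz | rfl | hz
    · rw [Real.sign_of_neg (mul_neg_of_pos_of_neg hdgt hz), Real.sign_of_neg hz]; ring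
    · simp [Real.sign_zero]
    · rw [Real.sign_of_pos (mul_pos hdgt hz), Real.sign_of_pos hz]; ring

lemma integral_sign_affine (d : ℝ) (hd : d ≠ 0) (r : ℝ) :
    ∫ y, y * Real.sign (r + d * y) ∂(gaussianReal 0 1)
      = (d / |d|) * (2 * stdPdf (r / d)) := by
  have key : ∀ y : ℝ, y * Real.sign (r + d * y)
      = (d / |d|) * (y * Real.sign (y - (-(r / d)))) := by
    intro y
    have : r + d * y = d * (y - (-(r / d))) := by field_simp; ring
    rw [this, sign_const_mul d _ hd]; ring
  simp_rw [key]
  rw [MeasureTheory.integral_const_mul, integral_sign_shift]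
  have : stdPdf (-(r/d)) = stdPdf (r/d) := stdPdf_even _
  rw [this]

lemma integral_id_gaussianReal : ∫ y, y ∂(gaussianReal 0 1) = 0 := by
  rw [integral_gaussianReal_eq]
  have h : (fun x : ℝ => stdPdf x * x) = fun x => x * stdPdf x := by ext x; ring
  rw [h, ← intervalIntegral.integral_Iio_add_Ici (b := 0)
    integrable_mul_stdPdf.integrableOn integrable_mul_stdPdf.integrableOn,
    integral_Iio_mul_stdPdf, integral_Ici_eq_integral_Ioi, integral_Ioi_mul_stdPdf]
  ring

lemma integrable_id_gaussianReal : Integrable (fun y : ℝ => y) (gaussianReal 0 1) := by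
  exact (integrable_gaussianReal_iff (fun y => y) measurable_id).mpr integrable_mul_stdPdf

lemma integral_stdPdf_smul (k : ℝ) :
    ∫ x, stdPdf (k * x) ∂(gaussianReal 0 1)
      = (2 * π)⁻¹ * Real.sqrt (π / ((1 + k ^ 2) / 2)) := by
  rw [integral_gaussianReal_eq]
  have h : ∀ x : ℝ, stdPdf x * stdPdf (k * x)
      = (2 * π)⁻¹ * Real.exp (-((1 + k ^ 2) / 2) * x ^ 2) := by
    intro x
    have h1 : -x ^ 2 / 2 + -(k * x) ^ 2 / 2 = -((1 + k ^ 2) / 2) * x ^ 2 := by ring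
    have h2 : (Real.sqrt (2 * π))⁻¹ * (Real.sqrt (2 * π))⁻¹ = (2 * π)⁻¹ := by
      rw [← mul_inv, Real.mul_self_sqrt (by positivity)]
    rw [stdPdf_eval, stdPdf_eval, mul_mul_mul_comm, ← Real.exp_add, h1, h2]
  simp_rw [h]
  rw [MeasureTheory.integral_const_mul, integral_gaussian]

/-- If `X, Y` are independent standard Gaussians, `a > 0`, `c > 0`, `β = (c−b)/a`,
`ξ = aX + bY`, `p = cY`, then `E[p · sgn(ξ − p)] = −2cβ/(√(2π)·√(1+β²))`. -/
theorem expectation_price_mul_sign {Ω : Type*} [MeasureSpace Ω]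
    [IsProbabilityMeasure (ℙ : Measure Ω)]
    (X Y : Ω → ℝ) (hXm : Measurable X) (hYm : Measurable Y)
    (hindep : IndepFun X Y ℙ)
    (hX : Measure.map X ℙ = gaussianReal 0 1)
    (hY : Measure.map Y ℙ = gaussianReal 0 1)
    (a b c β : ℝ) (ha : 0 < a) (hc : 0 < c) (hβ : β = (c - b) / a) :
    ∫ ω, (c * Y ω) * Real.sign ((a * X ω + b * Y ω) - c * Y ω) ∂ℙ =
      -2 * c * β / (Real.sqrt (2 * Real.pi) * Real.sqrt (1 + β ^ 2)) := by
  set d : ℝ := b - c with hd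
  set F : ℝ × ℝ → ℝ := fun p => c * (p.2 * Real.sign (a * p.1 + d * p.2)) with hF
  have hrw : ∀ ω, (c * Y ω) * Real.sign ((a * X ω + b * Y ω) - c * Y ω) = F (X ω, Y ω) := by
    intro ω
    have harg : (a * X ω + b * Y ω) - c * Y ω = a * X ω + d * Y ω := by rw [hd]; ring
    rw [harg, hF]; ring
  simp_rw [hrw]
  have hmap : Measure.map (fun ω => (X ω, Y ω)) ℙ
      = (gaussianReal 0 1).prod (gaussianReal 0 1) := by
    rw [(indepFun_iff_map_prod_eq_prod_map_map hXm.aemeasurable hYm.aemeasurable).mp hindep,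
      hX, hY]
  have hFmeas : Measurable F := by
    refine Measurable.const_mul ?_ c
    exact measurable_snd.mul (measurable_realSign.comp
      ((measurable_fst.const_mul a).add (measurable_snd.const_mul d)))
  have hbound : Integrable (fun p : ℝ × ℝ => (1:ℝ) * (|c| * |p.2|))
      ((gaussianReal 0 1).prod (gaussianReal 0 1)) :=
    (integrable_const (1:ℝ)).mul_prod (integrable_id_gaussianReal.abs.const_mul |c|)
  have hFint : Integrable F ((gaussianReal 0 1).prod (gaussianReal 0 1)) := by
    refine hbound.mono' hFmeas.aestronglyMeasurable (Filter.Eventually.of_forall fun p => ?_)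
    calc ‖F p‖ = |c| * |p.2| * |Real.sign (a * p.1 + d * p.2)| := by
          rw [hF, norm_eq_abs, abs_mul, abs_mul]; ring
      _ ≤ |c| * |p.2| * 1 := mul_le_mul_of_nonneg_left (abs_realSign _) (by positivity)
      _ = (1:ℝ) * (|c| * |p.2|) := by ring
  have step1 : ∫ ω, F (X ω, Y ω) ∂ℙ
      = ∫ x, ∫ y, F (x, y) ∂(gaussianReal 0 1) ∂(gaussianReal 0 1) := by
    rw [← integral_prod F hFint, ← hmap,
      integral_map (hXm.prodMk hYm).aemeasurable hFmeas.aestronglyMeasurable]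
  rw [step1]
  by_cases hβ0 : β = 0
  · have hd0 : d = 0 := by
      have : c - b = 0 := by
        have := hβ.symm; rw [hβ0] at this
        field_simp at this; linarith
      rw [hd]; linarith
    have hin : ∀ x : ℝ, ∫ y, F (x, y) ∂(gaussianReal 0 1) = 0 := by
      intro x
      have : ∀ y : ℝ, F (x, y) = (c * Real.sign (a * x)) * y := by
        intro y; rw [hF]; simp only [hd0]; ring
      simp_rw [this]
      rw [MeasureTheory.integral_const_mul, _root_.integral_id_gaussianReal, mul_zero]
    simp_rw [hin]
    simp [hβ0]
  · have hdval : d = -(a * β) := by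
      rw [hd, hβ]; field_simp; ring
    have hdne : d ≠ 0 := by
      rw [hdval]
      exact neg_ne_zero.mpr (mul_ne_zero ha.ne' hβ0)
    have hin : ∀ x : ℝ, ∫ y, F (x, y) ∂(gaussianReal 0 1)
        = (c * (d / |d|) * 2) * stdPdf ((a / d) * x) := by
      intro x
      have h1 : ∀ y : ℝ, F (x, y) = c * (y * Real.sign ((a * x) + d * y)) := fun y => rfl
      simp_rw [h1]
      rw [MeasureTheory.integral_const_mul, integral_sign_affine d hdne (a * x)]
      have : a * x / d = (a / d) * x := by ring
      rw [this]; ring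
    simp_rw [hin]
    rw [MeasureTheory.integral_const_mul, integral_stdPdf_smul (a / d)]
    -- final algebra
    have habs : |d| = a * |β| := by rw [hdval, abs_neg, abs_mul, abs_of_pos ha]
    have hk2 : (a / d) ^ 2 = 1 / β ^ 2 := by
      rw [hdval]; field_simp
    have h1β : (0:ℝ) < 1 + β ^ 2 := by positivity
    have harg : π / ((1 + (a / d) ^ 2) / 2) = (2 * π) * (β ^ 2 / (1 + β ^ 2)) := by
      rw [hk2]; field_simp; ring
    have hsq : Real.sqrt (π / ((1 + (a / d) ^ 2) / 2))
        = Real.sqrt (2 * π) * (|β| / Real.sqrt (1 + β ^ 2)) := by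
      rw [harg, Real.sqrt_mul (by positivity), Real.sqrt_div (sq_nonneg β),
        Real.sqrt_sq_eq_abs]
    rw [hsq, habs, hdval]
    have e1 : -(a * β) / (a * |β|) = -(β / |β|) := by
      rw [neg_div, mul_div_mul_left _ _ ha.ne']
    rw [e1]
    have hss : Real.sqrt (2 * π) * Real.sqrt (2 * π) = 2 * π :=
      Real.mul_self_sqrt (by positivity)
    have hb1 : |β| ≠ 0 := abs_ne_zero.mpr hβ0
    have hs1 : Real.sqrt (1 + β ^ 2) ≠ 0 := by positivity
    have hs2 : Real.sqrt (2 * π) ≠ 0 := by positivity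
    have hπ : (2 : ℝ) * π ≠ 0 := by positivity
    field_simp
    ring_nf
    rw [Real.sq_sqrt (by positivity : (0:ℝ) ≤ π * 2)]
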